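/- Let T be a triangulated category, L a localization functor on T with associated colocalization Γ (so ΓX → X → LX → is exact), and suppose Γ has a right adjoint Λ which is a localization functor with Im Λ satisfying ΛΓ ≅ Λ and ΓΛ ≅ Γ. Then Γ and Λ restrict to mutually quasi-inverse equivalences between Im Λ and Im Γ. -/

import Mathlib

open CategoryTheory Limits Pretriangulated

namespace Stmt10Aux

variable {T : Type*} [Category T]

/-- The restriction of `Gam` to a functor `Im Λ ⥤ Im Γ`. -/
def restr (Gam Lam : T ⥤ T) : Lam.EssImageSubcategory ⥤ Gam.EssImageSubcategory where
  obj X := ⟨Gam.obj X.obj, Gam.obj_mem_essImage X.obj⟩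
  map {X Y} f := ObjectProperty.homMk (Gam.map f.hom)
  map_id X := by ext; simp
  map_comp f g := by ext; simp

/-- The restricted adjunction. -/
def adjres (Gam Lam : T ⥤ T) (adj : Gam ⊣ Lam) : restr Gam Lam ⊣ restr Lam Gam :=
  Adjunction.mkOfHomEquiv
  { homEquiv := fun X Y =>
      { toFun := fun f => ObjectProperty.homMk (adj.homEquiv X.obj Y.obj f.hom)
        invFun := fun g => ObjectProperty.homMk ((adj.homEquiv X.obj Y.obj).symm g.hom)
        left_inv := fun f => by ext; exact (adj.homEquiv _ _).symm_apply_apply _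
        right_inv := fun g => by ext; exact (adj.homEquiv _ _).apply_symm_apply _ }
    homEquiv_naturality_left_symm := fun f g => by
      ext; exact adj.homEquiv_naturality_left_symm f.hom g.hom
    homEquiv_naturality_right := fun f g => by
      ext; exact adj.homEquiv_naturality_right f.hom g.hom }

theorem main (Gam Lam : T ⥤ T) (adj : Gam ⊣ Lam) (ηΛ : 𝟭 T ⟶ Lam)
    (hΛloc : ∀ X : T, IsIso (Lam.map (ηΛ.app X)) ∧
      Lam.map (ηΛ.app X) = ηΛ.app (Lam.obj X))
    (e₁ : Gam ⋙ Lam ≅ Lam) (e₂ : Lam ⋙ Gam ≅ Gam) :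
    ∃ (G : Lam.EssImageSubcategory ⥤ Gam.EssImageSubcategory)
      (H : Gam.EssImageSubcategory ⥤ Lam.EssImageSubcategory),
      (∀ X : Lam.EssImageSubcategory, (G.obj X).obj = Gam.obj X.obj) ∧
      (∀ X : Gam.EssImageSubcategory, (H.obj X).obj = Lam.obj X.obj) ∧
      Nonempty (G ⋙ H ≅ 𝟭 _) ∧ Nonempty (H ⋙ G ≅ 𝟭 _) := by
  -- `ηΛ` is an isomorphism on the essential image of `Lam`
  have hη : ∀ {A : T}, Lam.essImage A → IsIso (ηΛ.app A) := by
    rintro A ⟨Y, ⟨i⟩⟩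
    have h1 : IsIso (ηΛ.app (Lam.obj Y)) := (hΛloc Y).2 ▸ (hΛloc Y).1
    have nat : i.hom ≫ ηΛ.app A = ηΛ.app (Lam.obj Y) ≫ Lam.map i.hom := by
      simpa using ηΛ.naturality i.hom
    have : ηΛ.app A = i.inv ≫ ηΛ.app (Lam.obj Y) ≫ Lam.map i.hom := by
      rw [← nat, Iso.inv_hom_id_assoc]
    rw [this]; infer_instance
  -- `Lam` is faithful on the essential image of `Gam`
  have lamF : ∀ {A Z : T}, Gam.essImage A → ∀ (u v : A ⟶ Z),
      Lam.map u = Lam.map v → u = v := by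
    rintro A Z ⟨X, ⟨i⟩⟩ u v huv
    have nu := adj.counit.naturality (i.hom ≫ u)
    have nv := adj.counit.naturality (i.hom ≫ v)
    simp only [Functor.comp_map, Functor.id_map, Functor.map_comp, huv] at nu nv
    have h2 : adj.counit.app (Gam.obj X) ≫ i.hom ≫ u
        = adj.counit.app (Gam.obj X) ≫ i.hom ≫ v := by
      rw [← nu, ← nv]
    have h3 : i.hom ≫ u = i.hom ≫ v := by
      have h4 := congrArg (fun t => Gam.map (adj.unit.app X) ≫ t) h2
      simpa using h4
    exact (cancel_epi i.hom).mp h3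
  -- `Gam` is faithful on morphisms into the essential image of `Lam`
  have gamF : ∀ {X Y : T}, Lam.essImage Y → ∀ (f g : X ⟶ Y),
      Gam.map f = Gam.map g → f = g := by
    intro X Y hY f g hfg
    haveI := hη hY
    have hLf : Lam.map f = Lam.map g := by
      have nf := e₁.hom.naturality f
      have ng := e₁.hom.naturality g
      simp only [Functor.comp_map, hfg] at nf ng
      have : e₁.hom.app X ≫ Lam.map f = e₁.hom.app X ≫ Lam.map g := by rw [← nf, ← ng]
      exact (Iso.cancel_iso_hom_left (e₁.app X) _ _).mp this
    have nf := ηΛ.naturality f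
    have ng := ηΛ.naturality g
    simp only [Functor.id_map] at nf ng
    calc f = (f ≫ ηΛ.app Y) ≫ inv (ηΛ.app Y) := by simp
    _ = (g ≫ ηΛ.app Y) ≫ inv (ηΛ.app Y) := by rw [nf, ng, hLf]
    _ = g := by simp
  -- `Gam` is full on the essential image of `Lam`
  have gamFull : ∀ {X Y : T}, Lam.essImage X → Lam.essImage Y →
      ∀ h : Gam.obj X ⟶ Gam.obj Y, ∃ f : X ⟶ Y, Gam.map f = h := by
    intro X Y hX hY h
    haveI := hη hX
    haveI := hη hY
    set m : Lam.obj X ⟶ Lam.obj Y := e₁.inv.app X ≫ Lam.map h ≫ e₁.hom.app Y with hm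
    refine ⟨ηΛ.app X ≫ m ≫ inv (ηΛ.app Y), ?_⟩
    set f : X ⟶ Y := ηΛ.app X ≫ m ≫ inv (ηΛ.app Y) with hf
    have hLf : Lam.map f = m := by
      have nf := ηΛ.naturality f
      simp only [Functor.id_map] at nf
      have : ηΛ.app X ≫ Lam.map f = ηΛ.app X ≫ m := by
        rw [← nf, hf]; simp
      exact (cancel_epi (ηΛ.app X)).mp this
    apply lamF (Gam.obj_mem_essImage X)
    have ne := e₁.hom.naturality f
    simp only [Functor.comp_map] at ne
    have : Lam.map (Gam.map f) = e₁.hom.app X ≫ Lam.map f ≫ e₁.inv.app Y := by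
      rw [← Category.assoc, ← ne]; simp
    rw [this, hLf, hm]
    simp
  -- the restricted functors
  haveI : (restr Gam Lam).Faithful :=
    ⟨fun {X Y f g} hfg => ObjectProperty.hom_ext _
      (gamF Y.property f.hom g.hom (by have h := congrArg InducedCategory.Hom.hom hfg; exact h))⟩
  haveI : (restr Gam Lam).Full :=
    ⟨fun {X Y} h => let ⟨f, hf⟩ := gamFull X.property Y.property h.hom
      ⟨ObjectProperty.homMk f, by ext; exact hf⟩⟩
  haveI : (restr Gam Lam).EssSurj := by
    constructor
    intro Y
    obtain ⟨W, ⟨i⟩⟩ := Y.property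
    refine ⟨⟨Lam.obj W, Lam.obj_mem_essImage W⟩, ⟨?_⟩⟩
    have j : Gam.obj (Lam.obj W) ≅ Y.obj := e₂.app W ≪≫ i
    exact ObjectProperty.isoMk _ j
  haveI : (restr Gam Lam).IsEquivalence := {}
  let E := (restr Gam Lam).asEquivalence
  have hiso : restr Lam Gam ≅ E.inverse :=
    Adjunction.rightAdjointUniq (adjres Gam Lam adj) E.toAdjunction
  refine ⟨restr Gam Lam, restr Lam Gam, fun X => rfl, fun X => rfl, ⟨?_⟩, ⟨?_⟩⟩
  · exact Functor.isoWhiskerLeft _ hiso ≪≫ E.unitIso.symm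
  · exact Functor.isoWhiskerRight hiso _ ≪≫ E.counitIso

end Stmt10Aux

/-- **Proposition (coloc-fun (4)).** Let `T` be a triangulated category, `L` a localization
functor with associated colocalization `Γ` (functorial exact triangle `ΓX → X → LX → ΣΓX`),
and `Λ` a right adjoint of `Γ` which is itself a localization functor, satisfying
`ΛΓ ≅ Λ` and `ΓΛ ≅ Γ`.  Then `Γ` and `Λ` restrict to mutually quasi-inverse equivalences
between `Im Λ` and `Im Γ`. -/
theorem stmt10 {T : Type*} [Category T] [Preadditive T] [HasZeroObject T]
    [HasShift T ℤ] [∀ n : ℤ, (CategoryTheory.shiftFunctor T n).Additive]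
    [Pretriangulated T]
    (L Gam : T ⥤ T) (η : 𝟭 T ⟶ L) (θ : Gam ⟶ 𝟭 T)
    (δ : L ⟶ Gam ⋙ CategoryTheory.shiftFunctor T (1 : ℤ))
    (hloc : ∀ X : T, IsIso (L.map (η.app X)) ∧ L.map (η.app X) = η.app (L.obj X))
    (htri : ∀ X : T, Triangle.mk (θ.app X) (η.app X) (δ.app X) ∈ distTriang T)
    (Lam : T ⥤ T) (adj : Gam ⊣ Lam) (ηΛ : 𝟭 T ⟶ Lam)
    (hΛloc : ∀ X : T, IsIso (Lam.map (ηΛ.app X)) ∧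
      Lam.map (ηΛ.app X) = ηΛ.app (Lam.obj X))
    (e₁ : Gam ⋙ Lam ≅ Lam) (e₂ : Lam ⋙ Gam ≅ Gam) :
    ∃ (G : Lam.EssImageSubcategory ⥤ Gam.EssImageSubcategory)
      (H : Gam.EssImageSubcategory ⥤ Lam.EssImageSubcategory),
      (∀ X : Lam.EssImageSubcategory, (G.obj X).obj = Gam.obj X.obj) ∧
      (∀ X : Gam.EssImageSubcategory, (H.obj X).obj = Lam.obj X.obj) ∧
      Nonempty (G ⋙ H ≅ 𝟭 _) ∧ Nonempty (H ⋙ G ≅ 𝟭 _) := by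
  exact Stmt10Aux.main Gam Lam adj ηΛ hΛloc e₁ e₂
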